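/- For all n ≥ 2, i(n) - a(n) = 3/8 + (8ψ(n-2) + 8ψ(n-1))/2^(n+4), and in particular i(n) - a(n) ≥ 1/8. -/
import Mathlib


theorem stmt_15
    (psi : ℕ → ℤ)
    (hpsi0 : psi 0 = 1) (hpsi1 : psi 1 = 0)
    (hpsi : ∀ n : ℕ, 2 ≤ n → psi n = -2 * psi (n - 2) - psi (n - 1))
    (i a : ℕ → ℚ)
    (ha0 : a 0 = 0) (hi1 : i 1 = 1) (ha1 : a 1 = 0)
    (ha : ∀ n : ℕ, 2 ≤ n → a n = (i (n - 1) + a (n - 1)) / 2)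
    (hi23 : ∀ n : ℕ, 2 ≤ n → n ≤ 3 → i n = i (n - 1))
    (hi4 : i 4 = (i 1 + a 1 + i 2 + a 2) / 2)
    (hi5 : ∀ n : ℕ, 5 ≤ n → i n = (i 2 + a 2 + i (n - 3) + a (n - 3)) / 2) :
    ∀ n : ℕ, 2 ≤ n →
      i n - a n = 3 / 8 + (8 * (psi (n - 2) : ℚ) + 8 * psi (n - 1)) / 2 ^ (n + 4) ∧
      i n - a n ≥ 1 / 8 := by
  -- basic values
  have hi2 : i 2 = 1 := by have := hi23 2 (by norm_num) (by norm_num); simpa [hi1] using this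
  have ha2 : a 2 = 1/2 := by have := ha 2 (by norm_num); rw [this]; norm_num [hi1, ha1]
  have hi3 : i 3 = 1 := by have := hi23 3 (by norm_num) (by norm_num); simpa [hi2] using this
  have ha3 : a 3 = 3/4 := by have := ha 3 (by norm_num); rw [this]; norm_num [hi2, ha2]
  have hi4' : i 4 = 5/4 := by rw [hi4, hi1, ha1, hi2, ha2]; norm_num
  have ha4 : a 4 = 7/8 := by have := ha 4 (by norm_num); rw [this]; norm_num [hi3, ha3]
  have hψ2 : psi 2 = -2 := by have := hpsi 2 (by norm_num); simpa [hpsi0, hpsi1] using this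
  have hψ3 : psi 3 = 2 := by have := hpsi 3 (by norm_num); simp [hpsi1, hψ2] at this; omega
  -- the invariant quadratic form
  have hF : ∀ m : ℕ, 4 * psi m ^ 2 + 2 * psi m * psi (m+1) + 2 * psi (m+1) ^ 2 = 2 ^ (m+2) := by
    intro m
    induction m with
    | zero => simp [hpsi0, hpsi1]
    | succ k ihk =>
        have h : psi (k+2) = -2 * psi k - psi (k+1) := hpsi (k+2) (by omega)
        rw [show k+1+1 = k+2 from rfl, h]
        linear_combination 2 * ihk
  -- lower bound on psi m + psi (m+1)
  have hbd : ∀ m : ℕ, -2^(m+1) ≤ psi m + psi (m+1) := by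
    intro m
    have h := hF m
    have hc2 : (2:ℤ)^(m+2) = 2 * 2^(m+1) := by ring
    have hcge : (2:ℤ) ≤ 2^(m+1) := by
      calc (2:ℤ) = 2^1 := by norm_num
      _ ≤ 2^(m+1) := pow_le_pow_right₀ (by norm_num) (by omega)
    nlinarith [sq_nonneg (3 * psi m - psi (m+1)), sq_nonneg (psi m + psi (m+1) + 2^(m+1)),
      sq_nonneg ((2:ℤ)^(m+1))]
  -- closed forms for i and a
  have key : ∀ m : ℕ,
      i (m+2) = (3*(m:ℚ)+6)/16 + 33/64 + (7*(psi m : ℚ) + 5*psi (m+1))/2^(m+6) ∧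
      a (m+2) = (3*(m:ℚ)+6)/16 + 9/64 - ((psi m : ℚ) + 3*psi (m+1))/2^(m+6) := by
    intro m
    induction m using Nat.strong_induction_on with
    | _ m IH =>
      match m with
      | 0 => constructor <;> norm_num [hi2, ha2, hpsi0, hpsi1]
      | 1 => constructor <;> norm_num [hi3, ha3, hpsi1, hψ2]
      | 2 => constructor <;> norm_num [hi4', ha4, hψ2, hψ3]
      | (k+3) =>
        have IH0 := IH k (by omega)
        have IH2 := IH (k+2) (by omega)
        have hik5 : i (k+5) = (i 2 + a 2 + i (k+2) + a (k+2)) / 2 := hi5 (k+5) (by omega)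
        have hak5 : a (k+5) = (i (k+4) + a (k+4)) / 2 := ha (k+5) (by omega)
        have hr2 : (psi (k+2) : ℚ) = -2 * psi k - psi (k+1) := by
          exact_mod_cast congrArg (fun z : ℤ => (z : ℚ)) (hpsi (k+2) (by omega))
        have hr3 : (psi (k+3) : ℚ) = -2 * psi (k+1) - psi (k+2) := by
          exact_mod_cast congrArg (fun z : ℤ => (z : ℚ)) (hpsi (k+3) (by omega))
        have hr4 : (psi (k+4) : ℚ) = -2 * psi (k+2) - psi (k+3) := by
          exact_mod_cast congrArg (fun z : ℤ => (z : ℚ)) (hpsi (k+4) (by omega))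
        have h2k : (2:ℚ)^k ≠ 0 := by positivity
        constructor
        · show i (k+5) = _
          rw [hik5, hi2, ha2, IH0.1, IH0.2, hr4, hr3, hr2]
          push_cast
          simp only [pow_add]
          field_simp
          ring
        · show a (k+5) = _
          rw [hak5, IH2.1, IH2.2, hr4, hr3, hr2]
          push_cast
          simp only [pow_add]
          field_simp
          ring
  -- main statement
  intro n hn
  obtain ⟨m, rfl⟩ : ∃ m, n = m + 2 := ⟨n - 2, by omega⟩
  obtain ⟨hiM, haM⟩ := key m
  have hsub2 : m + 2 - 2 = m := by omega
  have hsub1 : m + 2 - 1 = m + 1 := by omega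
  have hD : i (m+2) - a (m+2)
      = 3/8 + (8 * (psi m : ℚ) + 8 * psi (m+1)) / 2 ^ (m+2+4) := by
    rw [hiM, haM]
    have : m + 2 + 4 = m + 6 := by omega
    rw [this]
    field_simp
    ring
  rw [hsub2, hsub1]
  refine ⟨hD, ?_⟩
  rw [hD]
  have hb : -(2:ℚ)^(m+1) ≤ (psi m : ℚ) + psi (m+1) := by exact_mod_cast hbd m
  have hp : (0:ℚ) < 2^(m+2+4) := by positivity
  rw [ge_iff_le]
  have h1 : (-(1:ℚ)/4) ≤ (8 * (psi m : ℚ) + 8 * psi (m+1)) / 2 ^ (m+2+4) := by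
    have hpow : (2:ℚ)^(m+2+4) = 32 * 2^(m+1) := by
      rw [show m+2+4 = (m+1)+5 from by omega, pow_add]; ring
    rw [div_le_div_iff₀ (by norm_num) hp, hpow]
    nlinarith [pow_pos (show (0:ℚ) < 2 by norm_num) (m+1)]
  linarith
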